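/- Let N be a semifinite von Neumann algebra with faithful normal semifinite trace τ. The exponential map is a bijection from {x ∈ L¹_τ(N) : x = x*} onto {g ∈ N : g positive and invertible, g − 1 ∈ L¹_τ(N)}. Consequently, every positive invertible g with g − 1 ∈ L¹_τ(N) is connected to 1 by the continuous path t ↦ e^{t·log g} lying in the set of positive invertibles g' with g' − 1 ∈ L¹_τ(N). -/

import Mathlib

set_option synthInstance.maxHeartbeats 1000000
set_option maxHeartbeats 1000000

open scoped ENNReal NNReal

variable {H : Type} [NormedAddCommGroup H] [InnerProductSpace ℂ H] [CompleteSpace H]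

/-- The absolute value `|x| = (x*x)^{1/2}` of a bounded operator, via the
continuous functional calculus. -/
noncomputable def absOp (x : H →L[ℂ] H) : H →L[ℂ] H := CFC.sqrt (star x * x)

/-- `τ : N₊ → [0,∞]` is a faithful normal semifinite trace on the von Neumann algebra `N`.
The function `τ` is defined on all operators but its properties only concern positive
elements of `N`. -/
structure IsFNSTrace (N : VonNeumannAlgebra H) (τ : (H →L[ℂ] H) → ℝ≥0∞) : Prop where
  map_zero : τ 0 = 0
  additive : ∀ x y : H →L[ℂ] H, x ∈ N → y ∈ N → 0 ≤ x → 0 ≤ y → τ (x + y) = τ x + τ y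
  homogeneous : ∀ (c : ℝ≥0) (x : H →L[ℂ] H), x ∈ N → 0 ≤ x → τ (c • x) = c * τ x
  tracial : ∀ x : H →L[ℂ] H, x ∈ N → τ (star x * x) = τ (x * star x)
  faithful : ∀ x : H →L[ℂ] H, x ∈ N → 0 ≤ x → τ x = 0 → x = 0
  monotone : ∀ x y : H →L[ℂ] H, x ∈ N → y ∈ N → 0 ≤ x → x ≤ y → τ x ≤ τ y
  normal : ∀ (ι : Type) (_ : Preorder ι) (f : ι → (H →L[ℂ] H)) (x : H →L[ℂ] H),
      (∀ i, f i ∈ N) → (∀ i, 0 ≤ f i) → Monotone f → IsLUB (Set.range f) x →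
      τ x = ⨆ i, τ (f i)
  semifinite : ∀ x : H →L[ℂ] H, x ∈ N → 0 ≤ x → x ≠ 0 →
      ∃ y : H →L[ℂ] H, y ∈ N ∧ 0 ≤ y ∧ y ≤ x ∧ y ≠ 0 ∧ τ y < ∞

/-- Membership in the trace ideal `L¹_τ(N) = {x ∈ N : τ(|x|) < ∞}`. -/
def MemL1 (N : VonNeumannAlgebra H) (τ : (H →L[ℂ] H) → ℝ≥0∞) (x : H →L[ℂ] H) : Prop :=
  x ∈ N ∧ τ (absOp x) < ∞

/-- The norm `‖x‖_{1,∞} = ‖x‖ + τ(|x|)` on the trace ideal. -/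
noncomputable def normL1 (τ : (H →L[ℂ] H) → ℝ≥0∞) (x : H →L[ℂ] H) : ℝ :=
  ‖x‖ + (τ (absOp x)).toReal


section AuxLemmas

variable {H : Type} [NormedAddCommGroup H] [InnerProductSpace ℂ H] [CompleteSpace H]

lemma VonNeumannAlgebra.isClosed' (N : VonNeumannAlgebra H) :
    IsClosed (N : Set (H →L[ℂ] H)) := by
  rw [← N.centralizer_centralizer]
  have hrw : Set.centralizer (Set.centralizer (N : Set (H →L[ℂ] H)))
      = ⋂ a ∈ Set.centralizer (N : Set (H →L[ℂ] H)), {x : H →L[ℂ] H | a * x = x * a} := by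
    ext x
    simp only [Set.mem_centralizer_iff, Set.mem_iInter, Set.mem_setOf_eq]
  rw [hrw]
  exact isClosed_biInter fun a _ =>
    isClosed_eq (continuous_const.mul continuous_id) (continuous_id.mul continuous_const)

lemma cfc_mem_vna (N : VonNeumannAlgebra H) {x : H →L[ℂ] H}
    (hx : x ∈ N) (f : ℝ → ℝ) : cfc f x ∈ N := by
  by_cases hsa : IsSelfAdjoint x
  · by_cases hf : ContinuousOn f (spectrum ℝ x)
    · rw [cfc_apply f x hsa hf]
      have hP : ∀ q ∈ (polynomialFunctions (spectrum ℝ x) : Set C(spectrum ℝ x, ℝ)),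
          cfcHom hsa (R := ℝ) q ∈ (N : Set (H →L[ℂ] H)) := by
        intro q hq
        rw [polynomialFunctions_coe] at hq
        obtain ⟨p, rfl⟩ := hq
        have h2 : cfcHom hsa (R := ℝ) (Polynomial.toContinuousMapOnAlgHom (spectrum ℝ x) p)
            = cfc (fun r => p.eval r) x := by
          rw [cfc_apply (fun r => p.eval r) x hsa (p.continuous_aeval.continuousOn)]
          congr 1
        rw [h2, cfc_polynomial p x hsa]
        have h4 : Polynomial.aeval x p ∈ Algebra.adjoin ℝ {x} :=
          Polynomial.aeval_mem_adjoin_singleton ℝ x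
        have h5 : Algebra.adjoin ℝ {x} ≤
            Subalgebra.restrictScalars ℝ N.toStarSubalgebra.toSubalgebra :=
          Algebra.adjoin_le (by simpa using hx)
        exact h5 h4
      have hfmem : (ContinuousMap.mk _ hf.restrict) ∈
          closure (polynomialFunctions (spectrum ℝ x) : Set C(spectrum ℝ x, ℝ)) := by
        have hdense := polynomialFunctions.topologicalClosure (spectrum ℝ x)
        have : (ContinuousMap.mk _ hf.restrict) ∈
            (polynomialFunctions (spectrum ℝ x)).topologicalClosure := by
          rw [hdense]; exact Algebra.mem_top
        exact this
      have hcont : Continuous (cfcHom hsa (R := ℝ) : C(spectrum ℝ x, ℝ) → (H →L[ℂ] H)) :=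
        (cfcHom_isClosedEmbedding hsa).continuous
      have hmem2 : cfcHom hsa (R := ℝ) (ContinuousMap.mk _ hf.restrict) ∈
          closure ((cfcHom hsa (R := ℝ)) ''
            (polynomialFunctions (spectrum ℝ x) : Set C(spectrum ℝ x, ℝ))) :=
        (image_closure_subset_closure_image hcont) ⟨_, hfmem, rfl⟩
      have hsub : closure ((cfcHom hsa (R := ℝ)) ''
          (polynomialFunctions (spectrum ℝ x) : Set C(spectrum ℝ x, ℝ)))
          ⊆ (N : Set (H →L[ℂ] H)) := by
        rw [← (N.isClosed').closure_eq]
        exact closure_mono (Set.image_subset_iff.mpr hP)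
      exact hsub hmem2
    · rw [cfc_apply_of_not_continuousOn x hf]; exact zero_mem N.toStarSubalgebra
  · rw [cfc_apply_of_not_predicate x hsa]; exact zero_mem N.toStarSubalgebra

lemma absOp_eq_cfc_abs {y : H →L[ℂ] H} (hy : IsSelfAdjoint y) :
    absOp y = cfc (fun r : ℝ => |r|) y := by
  have h1 : cfc (fun r : ℝ => |r|) y * cfc (fun r : ℝ => |r|) y = star y * y := by
    rw [hy.star_eq, ← cfc_mul (fun r : ℝ => |r|) (fun r : ℝ => |r|) y]
    calc cfc (fun r : ℝ => |r| * |r|) y = cfc (fun r : ℝ => r * r) y :=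
          cfc_congr fun r _ => abs_mul_abs_self r
      _ = y * y := by rw [cfc_mul (fun r : ℝ => r) (fun r : ℝ => r) y, cfc_id' ℝ y]
  have habs : absOp y = CFC.sqrt (star y * y) := rfl
  rw [habs]
  exact CFC.sqrt_unique h1 (cfc_nonneg fun r _ => abs_nonneg r)

lemma absOp_cfc {g : H →L[ℂ] H} (hg : IsSelfAdjoint g) (f : ℝ → ℝ)
    (hf : ContinuousOn f (spectrum ℝ g)) :
    absOp (cfc f g) = cfc (fun r => |f r|) g := by
  rw [absOp_eq_cfc_abs (cfc_predicate f g),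
    ← cfc_comp' (fun r : ℝ => |r|) f g (continuous_abs.continuousOn) hf]

lemma tau_cfc_le {N : VonNeumannAlgebra H} {τ : (H →L[ℂ] H) → ℝ≥0∞} (hτ : IsFNSTrace N τ)
    {g : H →L[ℂ] H} (hg : g ∈ N)
    {f h : ℝ → ℝ} (hf : ContinuousOn f (spectrum ℝ g)) (hh : ContinuousOn h (spectrum ℝ g))
    (c : ℝ≥0) (hb : ∀ r ∈ spectrum ℝ g, f r ≤ c * h r)
    (hf0 : ∀ r ∈ spectrum ℝ g, 0 ≤ f r) (hh0 : ∀ r ∈ spectrum ℝ g, 0 ≤ h r) :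
    τ (cfc f g) ≤ c * τ (cfc h g) := by
  have hch : ContinuousOn (fun r => (c : ℝ) * h r) (spectrum ℝ g) := continuousOn_const.mul hh
  have h2 : cfc (fun r => (c : ℝ) * h r) g = c • cfc h g := by
    rw [NNReal.smul_def]
    have := cfc_smul (R := ℝ) (c : ℝ) h g hh
    simpa [smul_eq_mul] using this
  have h1 : cfc f g ≤ c • cfc h g := h2 ▸ cfc_mono hb hf hch
  have hsmem : c • cfc h g ∈ N := by
    rw [NNReal.smul_def, ← algebraMap_smul ℂ ((c : ℝ)) (cfc h g)]
    exact N.toStarSubalgebra.smul_mem (cfc_mem_vna N hg h) _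
  calc τ (cfc f g) ≤ τ (c • cfc h g) :=
        hτ.monotone _ _ (cfc_mem_vna N hg f) hsmem (cfc_nonneg hf0) h1
    _ = c * τ (cfc h g) := by
        rw [hτ.homogeneous c _ (cfc_mem_vna N hg h) (cfc_nonneg hh0)]

lemma tau_cfc_lt_top {N : VonNeumannAlgebra H} {τ : (H →L[ℂ] H) → ℝ≥0∞} (hτ : IsFNSTrace N τ)
    {g : H →L[ℂ] H} (hg : g ∈ N)
    {f h : ℝ → ℝ} (hf : ContinuousOn f (spectrum ℝ g)) (hh : ContinuousOn h (spectrum ℝ g))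
    (c : ℝ≥0) (hb : ∀ r ∈ spectrum ℝ g, f r ≤ c * h r)
    (hf0 : ∀ r ∈ spectrum ℝ g, 0 ≤ f r) (hh0 : ∀ r ∈ spectrum ℝ g, 0 ≤ h r)
    (hfin : τ (cfc h g) < ∞) : τ (cfc f g) < ∞ :=
  lt_of_le_of_lt (tau_cfc_le hτ hg hf hh c hb hf0 hh0)
    (ENNReal.mul_lt_top ENNReal.coe_ne_top.lt_top hfin)

lemma memL1_cfc {N : VonNeumannAlgebra H} {τ : (H →L[ℂ] H) → ℝ≥0∞} (hτ : IsFNSTrace N τ)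
    {g : H →L[ℂ] H} (hg : g ∈ N) (hgsa : IsSelfAdjoint g)
    {f h : ℝ → ℝ} (hf : ContinuousOn f (spectrum ℝ g)) (hh : ContinuousOn h (spectrum ℝ g))
    (c : ℝ≥0) (hb : ∀ r ∈ spectrum ℝ g, |f r| ≤ c * |h r|)
    (hfin : τ (absOp (cfc h g)) < ∞) : MemL1 N τ (cfc f g) := by
  refine ⟨cfc_mem_vna N hg f, ?_⟩
  rw [absOp_cfc hgsa f hf]
  rw [absOp_cfc hgsa h hh] at hfin
  exact tau_cfc_lt_top hτ hg hf.abs hh.abs c hb (fun r _ => abs_nonneg _)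
    (fun r _ => abs_nonneg _) hfin

lemma exp_diff_le_aux {x y : ℝ} (h : y ≤ x) :
    |Real.exp x - Real.exp y| ≤ |x - y| * Real.exp (max x y) := by
  rw [max_eq_left h, abs_of_nonneg (sub_nonneg.mpr (Real.exp_le_exp.mpr h)),
    abs_of_nonneg (sub_nonneg.mpr h)]
  have h1 : (y - x) + 1 ≤ Real.exp (y - x) := Real.add_one_le_exp (y - x)
  have h3 : ((y - x) + 1) * Real.exp x ≤ Real.exp (y - x) * Real.exp x :=
    mul_le_mul_of_nonneg_right h1 (Real.exp_pos x).le
  have h2 : Real.exp (y - x) * Real.exp x = Real.exp y := by rw [← Real.exp_add]; ring_nf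
  rw [h2] at h3
  nlinarith [Real.exp_pos x]

lemma exp_diff_le (x y : ℝ) : |Real.exp x - Real.exp y| ≤ |x - y| * Real.exp (max x y) := by
  rcases le_total y x with h | h
  · exact exp_diff_le_aux h
  · rw [abs_sub_comm, abs_sub_comm x y, max_comm]
    exact exp_diff_le_aux h

lemma abs_log_le {m r : ℝ} (hm : 0 < m) (hmr : m ≤ r) :
    |Real.log r| ≤ max 1 m⁻¹ * |r - 1| := by
  have hr : 0 < r := lt_of_lt_of_le hm hmr
  rcases le_or_gt 1 r with h | h
  · rw [abs_of_nonneg (Real.log_nonneg h), abs_of_nonneg (by linarith : (0:ℝ) ≤ r - 1)]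
    calc Real.log r ≤ r - 1 := Real.log_le_sub_one_of_pos hr
      _ = 1 * (r - 1) := (one_mul _).symm
      _ ≤ max 1 m⁻¹ * (r - 1) :=
        mul_le_mul_of_nonneg_right (le_max_left _ _) (by linarith)
  · have h1 : Real.log r⁻¹ ≤ r⁻¹ - 1 := Real.log_le_sub_one_of_pos (inv_pos.mpr hr)
    rw [Real.log_inv] at h1
    have h2 : Real.log r < 0 := Real.log_neg hr h
    rw [abs_of_neg h2, abs_of_neg (by linarith : r - 1 < 0)]
    have h4 : r⁻¹ ≤ m⁻¹ := by
      rw [inv_le_inv₀ hr hm]; exact hmr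
    have h3 : r⁻¹ - 1 = (1 - r) * r⁻¹ := by field_simp
    have h5 : (1 - r) * r⁻¹ ≤ (1 - r) * m⁻¹ :=
      mul_le_mul_of_nonneg_left h4 (by linarith)
    calc -Real.log r ≤ r⁻¹ - 1 := by linarith
      _ = (1 - r) * r⁻¹ := h3
      _ ≤ (1 - r) * m⁻¹ := h5
      _ ≤ (1 - r) * max 1 m⁻¹ := mul_le_mul_of_nonneg_left (le_max_right _ _) (by linarith)
      _ = max 1 m⁻¹ * -(r - 1) := by ring

end AuxLemmas

section Master

variable {H : Type} [NormedAddCommGroup H] [InnerProductSpace ℂ H] [CompleteSpace H]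

lemma spectrum_lower_bound {g : H →L[ℂ] H} (hpos : 0 ≤ g) (hunit : IsUnit g) :
    ∃ m : ℝ, 0 < m ∧ ∀ r ∈ spectrum ℝ g, m ≤ r := by
  rcases Set.eq_empty_or_nonempty (spectrum ℝ g) with hsp | hsp
  · exact ⟨1, one_pos, fun r hr => absurd hr (by simp [hsp])⟩
  · have hcpt : IsCompact (spectrum ℝ g) := spectrum.isCompact g
    have hmem := hcpt.sInf_mem hsp
    refine ⟨sInf (spectrum ℝ g), ?_, fun r hr => csInf_le hcpt.bddBelow hr⟩
    rcases (spectrum_nonneg_of_nonneg hpos hmem).lt_or_eq with h | h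
    · exact h
    · rw [← h] at hmem
      exact absurd hmem ((spectrum.zero_notMem_iff ℝ).mpr hunit)

lemma master {N : VonNeumannAlgebra H} {τ : (H →L[ℂ] H) → ℝ≥0∞} (hτ : IsFNSTrace N τ)
    {g : H →L[ℂ] H} (hg : g ∈ N) (hpos : 0 ≤ g) (hunit : IsUnit g)
    (hL1 : MemL1 N τ (g - 1)) :
    ((MemL1 N τ (cfc Real.log g) ∧ IsSelfAdjoint (cfc Real.log g)) ∧
      cfc Real.exp (cfc Real.log g) = g) ∧
    (∀ t : ℝ, cfc (fun r : ℝ => Real.exp (t * Real.log r)) g ∈ N ∧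
      0 ≤ cfc (fun r : ℝ => Real.exp (t * Real.log r)) g ∧
      IsUnit (cfc (fun r : ℝ => Real.exp (t * Real.log r)) g) ∧
      MemL1 N τ (cfc (fun r : ℝ => Real.exp (t * Real.log r)) g - 1)) ∧
    cfc (fun r : ℝ => Real.exp ((0:ℝ) * Real.log r)) g = 1 ∧
    cfc (fun r : ℝ => Real.exp ((1:ℝ) * Real.log r)) g = g ∧
    (∀ t ε : ℝ, 0 < ε → ∃ δ, 0 < δ ∧ ∀ s : ℝ, |s - t| < δ →
      normL1 τ (cfc (fun r : ℝ => Real.exp (s * Real.log r)) g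
        - cfc (fun r : ℝ => Real.exp (t * Real.log r)) g) < ε) := by
  have hgsa : IsSelfAdjoint g := .of_nonneg hpos
  obtain ⟨m, hm0, hmle⟩ := spectrum_lower_bound hpos hunit
  have hpos' : ∀ r ∈ spectrum ℝ g, 0 < r := fun r hr => lt_of_lt_of_le hm0 (hmle r hr)
  have hlogC : ContinuousOn Real.log (spectrum ℝ g) := fun r hr =>
    (Real.continuousAt_log (hpos' r hr).ne').continuousWithinAt
  obtain ⟨L, hL⟩ := (spectrum.isCompact g).exists_bound_of_continuousOn hlogC
  set L' : ℝ := max L 0 with hL'def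
  have hL'0 : 0 ≤ L' := le_max_right _ _
  have hL' : ∀ r ∈ spectrum ℝ g, |Real.log r| ≤ L' := fun r hr =>
    le_trans (hL r hr) (le_max_left _ _)
  set c1 : ℝ := max 1 m⁻¹ with hc1def
  have hc10 : 0 < c1 := lt_of_lt_of_le one_pos (le_max_left _ _)
  have hlogb : ∀ r ∈ spectrum ℝ g, |Real.log r| ≤ c1 * |r - 1| := fun r hr =>
    abs_log_le hm0 (hmle r hr)
  have hcont : ∀ t : ℝ, ContinuousOn (fun r : ℝ => Real.exp (t * Real.log r)) (spectrum ℝ g) :=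
    fun t => Real.continuous_exp.comp_continuousOn (continuousOn_const.mul hlogC)
  have hg1 : cfc (fun r : ℝ => r - 1) g = g - 1 := by
    rw [cfc_sub (fun r : ℝ => r) (fun _ : ℝ => (1:ℝ)) g (by fun_prop) (by fun_prop),
      cfc_id' ℝ g, cfc_const 1 g hgsa, map_one]
  have hfin1 : τ (absOp (cfc (fun r : ℝ => r - 1) g)) < ∞ := by rw [hg1]; exact hL1.2
  have hγsub : ∀ t : ℝ, cfc (fun r : ℝ => Real.exp (t * Real.log r) - 1) g
      = cfc (fun r : ℝ => Real.exp (t * Real.log r)) g - 1 := by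
    intro t
    rw [cfc_sub (fun r : ℝ => Real.exp (t * Real.log r)) (fun _ : ℝ => (1:ℝ)) g (hcont t)
      (by fun_prop), cfc_const 1 g hgsa, map_one]
  have hγL1 : ∀ t : ℝ, MemL1 N τ (cfc (fun r : ℝ => Real.exp (t * Real.log r)) g - 1) := by
    intro t
    rw [← hγsub t]
    refine memL1_cfc hτ hg hgsa ((hcont t).sub continuousOn_const) (by fun_prop)
      (|t| * c1 * Real.exp (|t| * L')).toNNReal ?_ hfin1
    intro r hr
    have hmax' : max (t * Real.log r) 0 ≤ |t| * L' := by
      apply max_le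
      · refine le_trans (le_abs_self _) ?_
        rw [abs_mul]
        exact mul_le_mul_of_nonneg_left (hL' r hr) (abs_nonneg t)
      · positivity
    calc |Real.exp (t * Real.log r) - 1| = |Real.exp (t * Real.log r) - Real.exp 0| := by
          rw [Real.exp_zero]
      _ ≤ |t * Real.log r - 0| * Real.exp (max (t * Real.log r) 0) := exp_diff_le _ 0
      _ = |t| * |Real.log r| * Real.exp (max (t * Real.log r) 0) := by
          rw [sub_zero, abs_mul]
      _ ≤ |t| * (c1 * |r - 1|) * Real.exp (|t| * L') := by
          refine mul_le_mul ?_ (Real.exp_le_exp.mpr hmax') (Real.exp_pos _).le (by positivity)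
          exact mul_le_mul_of_nonneg_left (hlogb r hr) (abs_nonneg t)
      _ = (((|t| * c1 * Real.exp (|t| * L')).toNNReal : ℝ)) * |r - 1| := by
          rw [Real.coe_toNNReal _ (by positivity)]; ring
  have hγ0 : cfc (fun r : ℝ => Real.exp ((0:ℝ) * Real.log r)) g = 1 := by
    calc cfc (fun r : ℝ => Real.exp ((0:ℝ) * Real.log r)) g
        = cfc (fun _ : ℝ => (1:ℝ)) g := cfc_congr fun r _ => by simp
      _ = 1 := by rw [cfc_const 1 g hgsa, map_one]
  have hγ1 : cfc (fun r : ℝ => Real.exp ((1:ℝ) * Real.log r)) g = g := by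
    calc cfc (fun r : ℝ => Real.exp ((1:ℝ) * Real.log r)) g
        = cfc (fun r : ℝ => r) g := cfc_congr fun r hr => by
            rw [one_mul, Real.exp_log (hpos' r hr)]
      _ = g := cfc_id' ℝ g
  have hlogL1 : MemL1 N τ (cfc Real.log g) := by
    refine memL1_cfc hτ hg hgsa hlogC (by fun_prop) c1.toNNReal ?_ hfin1
    intro r hr
    rw [Real.coe_toNNReal _ hc10.le]
    exact hlogb r hr
  have hexplog : cfc Real.exp (cfc Real.log g) = g := by
    rw [← cfc_comp' Real.exp Real.log g Real.continuous_exp.continuousOn hlogC]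
    calc cfc (fun r : ℝ => Real.exp (Real.log r)) g = cfc (fun r : ℝ => r) g :=
        cfc_congr fun r hr => Real.exp_log (hpos' r hr)
      _ = g := cfc_id' ℝ g
  refine ⟨⟨⟨hlogL1, cfc_predicate _ g⟩, hexplog⟩, ?_, hγ0, hγ1, ?_⟩
  · intro t
    exact ⟨cfc_mem_vna N hg _, cfc_nonneg fun r _ => (Real.exp_pos _).le,
      (isUnit_cfc_iff (fun r : ℝ => Real.exp (t * Real.log r)) g (hcont t) hgsa).mpr
        fun r _ => (Real.exp_pos _).ne', hγL1 t⟩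
  · intro t ε hε
    have hτh_ne : τ (cfc (fun r : ℝ => |r - 1|) g) ≠ ∞ := by
      have h := hfin1
      rw [absOp_cfc hgsa (fun r : ℝ => r - 1) (by fun_prop)] at h
      exact h.ne
    set T : ℝ := (τ (cfc (fun r : ℝ => |r - 1|) g)).toReal with hT
    have hT0 : 0 ≤ T := ENNReal.toReal_nonneg
    set E : ℝ := Real.exp ((|t| + 1) * L') with hE
    have hE0 : 0 < E := Real.exp_pos _
    set K : ℝ := L' * E + c1 * E * T with hK
    have hK0 : 0 ≤ K := by positivity
    refine ⟨min 1 (ε / (K + 1)), lt_min one_pos (div_pos hε (by linarith)), ?_⟩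
    intro s hs
    have habs0 : (0:ℝ) ≤ |s - t| := abs_nonneg _
    have hst1 : |s - t| ≤ 1 := le_of_lt (lt_of_lt_of_le hs (min_le_left _ _))
    have hst2 : |s - t| < ε / (K + 1) := lt_of_lt_of_le hs (min_le_right _ _)
    have hsabs : |s| ≤ |t| + 1 := by
      calc |s| = |(s - t) + t| := by ring_nf
        _ ≤ |s - t| + |t| := abs_add_le _ _
        _ ≤ |t| + 1 := by linarith
    have hptbase : ∀ r ∈ spectrum ℝ g,
        |Real.exp (s * Real.log r) - Real.exp (t * Real.log r)|
          ≤ |s - t| * |Real.log r| * E := by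
      intro r hr
      have h2 : |s * Real.log r - t * Real.log r| = |s - t| * |Real.log r| := by
        rw [← sub_mul, abs_mul]
      have h3 : max (s * Real.log r) (t * Real.log r) ≤ (|t| + 1) * L' := by
        apply max_le
        · refine le_trans (le_abs_self _) ?_
          rw [abs_mul]
          exact mul_le_mul hsabs (hL' r hr) (abs_nonneg _) (by positivity)
        · refine le_trans (le_abs_self _) ?_
          rw [abs_mul]
          exact mul_le_mul (by linarith [abs_nonneg t] : |t| ≤ |t| + 1) (hL' r hr)
            (abs_nonneg _) (by positivity)
      calc |Real.exp (s * Real.log r) - Real.exp (t * Real.log r)|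
          ≤ |s * Real.log r - t * Real.log r|
              * Real.exp (max (s * Real.log r) (t * Real.log r)) :=
            exp_diff_le _ _
        _ = |s - t| * |Real.log r| * Real.exp (max (s * Real.log r) (t * Real.log r)) := by
            rw [h2]
        _ ≤ |s - t| * |Real.log r| * E :=
            mul_le_mul_of_nonneg_left (Real.exp_le_exp.mpr h3) (by positivity)
    have hdiff : cfc (fun r : ℝ => Real.exp (s * Real.log r)) g
        - cfc (fun r : ℝ => Real.exp (t * Real.log r)) g
        = cfc (fun r : ℝ => Real.exp (s * Real.log r) - Real.exp (t * Real.log r)) g :=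
      (cfc_sub _ _ g (hcont s) (hcont t)).symm
    have hnorm : ‖cfc (fun r : ℝ => Real.exp (s * Real.log r)) g
        - cfc (fun r : ℝ => Real.exp (t * Real.log r)) g‖ ≤ |s - t| * (L' * E) := by
      rw [hdiff]
      refine norm_cfc_le (by positivity) ?_
      intro r hr
      rw [Real.norm_eq_abs]
      calc |Real.exp (s * Real.log r) - Real.exp (t * Real.log r)|
          ≤ |s - t| * |Real.log r| * E := hptbase r hr
        _ ≤ |s - t| * L' * E :=
            mul_le_mul_of_nonneg_right
              (mul_le_mul_of_nonneg_left (hL' r hr) (abs_nonneg (s - t))) hE0.le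
        _ = |s - t| * (L' * E) := by ring
    have htr : (τ (absOp (cfc (fun r : ℝ => Real.exp (s * Real.log r)) g
        - cfc (fun r : ℝ => Real.exp (t * Real.log r)) g))).toReal
        ≤ |s - t| * (c1 * E) * T := by
      rw [hdiff, absOp_cfc hgsa (fun r : ℝ => Real.exp (s * Real.log r) - Real.exp (t * Real.log r))
        ((hcont s).sub (hcont t))]
      set c' : ℝ≥0 := (|s - t| * (c1 * E)).toNNReal with hc'
      have hble : ∀ r ∈ spectrum ℝ g,
          |Real.exp (s * Real.log r) - Real.exp (t * Real.log r)|
            ≤ (c' : ℝ) * |r - 1| := by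
        intro r hr
        rw [hc', Real.coe_toNNReal _ (by positivity)]
        calc |Real.exp (s * Real.log r) - Real.exp (t * Real.log r)|
            ≤ |s - t| * |Real.log r| * E := hptbase r hr
          _ ≤ |s - t| * (c1 * |r - 1|) * E :=
              mul_le_mul_of_nonneg_right
                (mul_le_mul_of_nonneg_left (hlogb r hr) (abs_nonneg (s - t))) hE0.le
          _ = |s - t| * (c1 * E) * |r - 1| := by ring
      have hle := tau_cfc_le hτ hg (((hcont s).sub (hcont t)).abs)
        (by fun_prop : ContinuousOn (fun r : ℝ => |r - 1|) (spectrum ℝ g)) c' hble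
        (fun r _ => abs_nonneg _) (fun r _ => abs_nonneg _)
      calc (τ (cfc (fun r : ℝ =>
            |Real.exp (s * Real.log r) - Real.exp (t * Real.log r)|) g)).toReal
          ≤ ((c' : ℝ≥0∞) * τ (cfc (fun r : ℝ => |r - 1|) g)).toReal :=
            ENNReal.toReal_mono (ENNReal.mul_ne_top ENNReal.coe_ne_top hτh_ne) hle
        _ = (c' : ℝ) * T := by rw [ENNReal.toReal_mul, ENNReal.coe_toReal]
        _ = |s - t| * (c1 * E) * T := by
            rw [hc', Real.coe_toNNReal _ (by positivity)]
    have hfinal : |s - t| * (K + 1) < ε := (lt_div_iff₀ (by linarith)).mp hst2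
    have hsum : |s - t| * (L' * E) + |s - t| * (c1 * E) * T ≤ |s - t| * (K + 1) := by
      rw [hK]; nlinarith
    show ‖cfc (fun r : ℝ => Real.exp (s * Real.log r)) g
        - cfc (fun r : ℝ => Real.exp (t * Real.log r)) g‖
      + (τ (absOp (cfc (fun r : ℝ => Real.exp (s * Real.log r)) g
        - cfc (fun r : ℝ => Real.exp (t * Real.log r)) g))).toReal < ε
    linarith
  end Master

/-- The exponential map is a bijection from the self-adjoint part of `L¹_τ(N)` onto the
set of positive invertible elements `g` of `N` with `g - 1 ∈ L¹_τ(N)`.  Consequently,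
every such `g` is connected to `1` by the `‖·‖_{1,∞}`-continuous path `t ↦ e^{t log g}`
lying in the positive invertibles `g'` with `g' - 1 ∈ L¹_τ(N)`. -/
theorem exp_bijection_positive_invertibles (N : VonNeumannAlgebra H)
    (τ : (H →L[ℂ] H) → ℝ≥0∞) (hτ : IsFNSTrace N τ) :
    Set.BijOn (fun x : H →L[ℂ] H => cfc Real.exp x)
      {x : H →L[ℂ] H | MemL1 N τ x ∧ IsSelfAdjoint x}
      {g : H →L[ℂ] H | g ∈ N ∧ 0 ≤ g ∧ IsUnit g ∧ MemL1 N τ (g - 1)} ∧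
    ∀ g : H →L[ℂ] H, g ∈ N → 0 ≤ g → IsUnit g → MemL1 N τ (g - 1) →
      (let γ : ℝ → (H →L[ℂ] H) := fun t => cfc (fun r : ℝ => Real.exp (t * Real.log r)) g
       γ 0 = 1 ∧ γ 1 = g ∧
       (∀ t ∈ Set.Icc (0:ℝ) 1, γ t ∈ N ∧ 0 ≤ γ t ∧ IsUnit (γ t) ∧ MemL1 N τ (γ t - 1)) ∧
       (∀ t : ℝ, ∀ ε > (0:ℝ), ∃ δ > (0:ℝ), ∀ s : ℝ, |s - t| < δ →
          normL1 τ (γ s - γ t) < ε)) := by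
  constructor
  · refine ⟨?_, ?_, ?_⟩
    · -- MapsTo
      rintro x ⟨⟨hxN, hxfin⟩, hxsa⟩
      simp only [Set.mem_setOf_eq]
      obtain ⟨B, hB⟩ := (spectrum.isCompact x).exists_bound_of_continuousOn
        (continuous_id.continuousOn (s := spectrum ℝ x))
      refine ⟨cfc_mem_vna N hxN _, cfc_nonneg fun r _ => (Real.exp_pos _).le,
        (isUnit_cfc_iff Real.exp x (by fun_prop) hxsa).mpr fun r _ => (Real.exp_pos _).ne', ?_⟩
      have heq : cfc (fun r : ℝ => Real.exp r - 1) x = cfc Real.exp x - 1 := by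
        rw [cfc_sub Real.exp (fun _ : ℝ => (1:ℝ)) x (by fun_prop) (by fun_prop),
          cfc_const 1 x hxsa, map_one]
      show MemL1 N τ (cfc Real.exp x - 1)
      rw [← heq]
      refine memL1_cfc hτ hxN hxsa (by fun_prop)
        (by fun_prop : ContinuousOn (fun r : ℝ => r) (spectrum ℝ x))
        (Real.exp (max B 0)).toNNReal ?_ ?_
      · intro r hr
        rw [Real.coe_toNNReal _ (Real.exp_pos _).le]
        have h1 := exp_diff_le r 0
        rw [Real.exp_zero, sub_zero] at h1
        have h2 : max r 0 ≤ max B 0 := by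
          refine max_le_max ?_ le_rfl
          calc r ≤ |r| := le_abs_self r
            _ = ‖r‖ := (Real.norm_eq_abs r).symm
            _ ≤ B := hB r hr
        calc |Real.exp r - 1| ≤ |r| * Real.exp (max r 0) := h1
          _ ≤ Real.exp (max B 0) * |r| := by
              rw [mul_comm]
              exact mul_le_mul_of_nonneg_right (Real.exp_le_exp.mpr h2) (abs_nonneg r)
      · rw [cfc_id' ℝ x]
        exact hxfin
    · -- InjOn
      rintro x ⟨_, hxsa⟩ y ⟨_, hysa⟩ hxy
      have hlogexp : ∀ z : H →L[ℂ] H, IsSelfAdjoint z →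
          cfc Real.log (cfc Real.exp z) = z := by
        intro z hz
        have hlogc : ContinuousOn Real.log (Real.exp '' spectrum ℝ z) := by
          rintro _ ⟨r, _, rfl⟩
          exact (Real.continuousAt_log (Real.exp_pos r).ne').continuousWithinAt
        rw [← cfc_comp' Real.log Real.exp z hlogc (by fun_prop)]
        calc cfc (fun r : ℝ => Real.log (Real.exp r)) z = cfc (fun r : ℝ => r) z :=
            cfc_congr fun r _ => Real.log_exp r
          _ = z := cfc_id' ℝ z
      have h1 := hlogexp x hxsa
      have h2 := hlogexp y hysa
      change cfc Real.exp x = cfc Real.exp y at hxy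
      rw [hxy] at h1
      exact h1.symm.trans h2
    · -- SurjOn
      intro g hgm
      simp only [Set.mem_setOf_eq] at hgm
      obtain ⟨hg, hpos, hunit, hL1⟩ := hgm
      obtain ⟨⟨hx1, hxe⟩, -, -, -, -⟩ := master hτ hg hpos hunit hL1
      exact ⟨cfc Real.log g, hx1, hxe⟩
  · intro g hg hpos hunit hL1
    obtain ⟨-, hprops, hγ0, hγ1, hcont⟩ := master hτ hg hpos hunit hL1
    exact ⟨hγ0, hγ1, fun t _ => hprops t, fun t ε hε => hcont t ε hε⟩
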